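/- arXiv:1408.0919 — 4 statements merged into one kernel-verified Lean document; each statement's English description precedes it below -/
import Mathlib

section
/- Let A ⊆ ℝ be a Lebesgue measurable set and c ≥ 1/2. Define A'_c to be the set of points τ ∈ ℝ such that λ(A ∩ [a,b])/(b−a) → 1 as a, b → τ subject to a < b and max(|b−τ|, |a−τ|)/(b−a) ≤ c. Then the symmetric difference A △ A'_c has Lebesgue measure zero. -/
open MeasureTheory Set Filter

private lemma aux_small {S : Set ℝ} {x : ℝ}
    (h : Tendsto (fun r => volume (S ∩ Metric.closedBall x r) / volume (Metric.closedBall x r))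
      (nhdsWithin 0 (Set.Ioi 0)) (nhds 0)) {ε : ℝ} (hε : 0 < ε) :
    ∃ δ > 0, ∀ r : ℝ, 0 < r → r < δ →
      (volume (S ∩ Metric.closedBall x r)).toReal < ε * (2 * r) := by
  have hev : ∀ᶠ r in nhdsWithin 0 (Set.Ioi 0),
      volume (S ∩ Metric.closedBall x r) / volume (Metric.closedBall x r) < ENNReal.ofReal ε :=
    h.eventually_lt_const (by simpa using ENNReal.ofReal_pos.2 hε)
  rw [Filter.eventually_iff, mem_nhdsGT_iff_exists_Ioo_subset] at hev
  obtain ⟨u, hu, hsub⟩ := hev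
  refine ⟨u, hu, fun r hr hru => ?_⟩
  have hlt := hsub ⟨hr, hru⟩
  simp only [Set.mem_setOf_eq] at hlt
  have hball : volume (Metric.closedBall x r) = ENNReal.ofReal (2 * r) :=
    Real.volume_closedBall x r
  have h0 : volume (Metric.closedBall x r) ≠ 0 := by
    rw [hball]; simp [ENNReal.ofReal_pos]; linarith
  have htop : volume (Metric.closedBall x r) ≠ ⊤ := by
    rw [hball]; exact ENNReal.ofReal_ne_top
  rw [ENNReal.div_lt_iff (Or.inl h0) (Or.inl htop)] at hlt
  rw [hball, ← ENNReal.ofReal_mul hε.le] at hlt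
  exact ENNReal.toReal_lt_of_lt_ofReal hlt

/-- For a measurable `A ⊆ ℝ` and `c ≥ 1/2`, the set `A'_c` of cone-density points of `A`
(the points `τ` where `λ(A ∩ [a,b])/(b-a) → 1` as `a, b → τ` with `a < b` and
`max(|b-τ|,|a-τ|)/(b-a) ≤ c`) differs from `A` by a Lebesgue-null set. -/
theorem cone_density_symmDiff_null (A : Set ℝ) (hA : MeasurableSet A)
    (c : ℝ) (hc : 1/2 ≤ c) :
    volume (symmDiff A {τ : ℝ | ∀ ε > 0, ∃ δ > 0, ∀ a b : ℝ, a < b →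
      max |b - τ| |a - τ| / (b - a) ≤ c → |a - τ| < δ → |b - τ| < δ →
      |(volume (A ∩ Icc a b)).toReal / (b - a) - 1| < ε}) = 0 := by
  have hc0 : (0:ℝ) < c := lt_of_lt_of_le (by norm_num) hc
  have h1 := Besicovitch.ae_tendsto_measure_inter_div_of_measurableSet (volume : Measure ℝ) hA
  have h2 := Besicovitch.ae_tendsto_measure_inter_div_of_measurableSet (volume : Measure ℝ)
    hA.compl
  rw [measure_eq_zero_iff_ae_notMem]
  filter_upwards [h1, h2] with x hx1 hx2 hmem
  rw [Set.mem_symmDiff] at hmem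
  rcases hmem with ⟨hxA, hxA'⟩ | ⟨hxA', hxA⟩
  · -- x ∈ A but not a cone density point : contradiction using density of Aᶜ is 0
    apply hxA'
    have hxc : x ∉ Aᶜ := by simpa using hxA
    rw [Set.indicator_of_notMem hxc] at hx2
    intro ε hε
    obtain ⟨δ, hδ, hδ'⟩ := aux_small hx2 (show (0:ℝ) < ε / (2 * c) by positivity)
    refine ⟨δ, hδ, fun a b hab hcone ha hb => ?_⟩
    set R := max |b - x| |a - x| with hR
    have hba : (0:ℝ) < b - a := sub_pos.2 hab
    have hbR : |b - x| ≤ R := le_max_left _ _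
    have haR : |a - x| ≤ R := le_max_right _ _
    have hRpos : 0 < R := by
      have h1' : b - x ≤ |b - x| := le_abs_self _
      have h2' : x - a ≤ |a - x| := by rw [abs_sub_comm]; exact le_abs_self _
      linarith
    have hRδ : R < δ := max_lt hb ha
    have hRc : R ≤ c * (b - a) := (div_le_iff₀ hba).1 hcone
    have hsub : Icc a b ⊆ Metric.closedBall x R := by
      intro y hy
      rw [Metric.mem_closedBall, Real.dist_eq, abs_le]
      constructor
      · have := neg_abs_le (a - x); linarith [hy.1]
      · have := le_abs_self (b - x); linarith [hy.2]
    have hfin : volume (Aᶜ ∩ Metric.closedBall x R) ≠ ⊤ := by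
      refine ((measure_mono Set.inter_subset_right).trans_lt ?_).ne
      rw [Real.volume_closedBall]; exact ENNReal.ofReal_lt_top
    have hmono : (volume (Aᶜ ∩ Icc a b)).toReal ≤ (volume (Aᶜ ∩ Metric.closedBall x R)).toReal :=
      ENNReal.toReal_mono hfin (measure_mono (Set.inter_subset_inter_right _ hsub))
    have hsmall := hδ' R hRpos hRδ
    have hmeas : (volume (Aᶜ ∩ Icc a b)).toReal < ε * (b - a) := by
      have hkey : ε / (2 * c) * (2 * R) = ε * R / c := by field_simp
      have hstep : ε * R / c ≤ ε * (b - a) := by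
        rw [div_le_iff₀ hc0]
        nlinarith [mul_le_mul_of_nonneg_left hRc hε.le]
      linarith [hmono, hsmall, hkey ▸ hsmall]
    have hfinI : volume (A ∩ Icc a b) ≠ ⊤ := by
      refine ((measure_mono Set.inter_subset_right).trans_lt ?_).ne
      rw [Real.volume_Icc]; exact ENNReal.ofReal_lt_top
    have hfinI' : volume (Aᶜ ∩ Icc a b) ≠ ⊤ := by
      refine ((measure_mono Set.inter_subset_right).trans_lt ?_).ne
      rw [Real.volume_Icc]; exact ENNReal.ofReal_lt_top
    have hsum : (volume (A ∩ Icc a b)).toReal + (volume (Aᶜ ∩ Icc a b)).toReal = b - a := by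
      have h' : volume (Icc a b ∩ A) + volume (Icc a b \ A) = volume (Icc a b) :=
        measure_inter_add_diff _ hA
      rw [Set.inter_comm, Set.diff_eq_compl_inter, Real.volume_Icc] at h'
      have := congrArg ENNReal.toReal h'
      rw [ENNReal.toReal_add hfinI hfinI', ENNReal.toReal_ofReal hba.le] at this
      exact this
    set t := (volume (Aᶜ ∩ Icc a b)).toReal with htdef
    have ht0 : 0 ≤ t := ENNReal.toReal_nonneg
    have heq : (volume (A ∩ Icc a b)).toReal / (b - a) - 1 = -(t / (b - a)) := by
      field_simp
      linarith
    rw [heq, abs_neg, abs_of_nonneg (div_nonneg ht0 hba.le)]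
    exact (div_lt_iff₀ hba).2 hmeas
  · -- x ∉ A but x is a cone density point : contradiction using density of A is 0
    have hxc : x ∉ A := hxA
    rw [Set.indicator_of_notMem hxc] at hx1
    obtain ⟨δ₂, hδ₂, hs⟩ := aux_small hx1 (show (0:ℝ) < 1/4 by norm_num)
    obtain ⟨δ₁, hδ₁, h1'⟩ := hxA' (1/2) (by norm_num)
    set r := min δ₁ δ₂ / 2 with hrdef
    have hr : 0 < r := by positivity
    have hr1 : r < δ₁ := by
      have := min_le_left δ₁ δ₂; simp only [hrdef]; linarith [min_le_left δ₁ δ₂]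
    have hr2 : r < δ₂ := by
      simp only [hrdef]; linarith [min_le_right δ₁ δ₂]
    have hab : x - r < x + r := by linarith
    have habs1 : |x - r - x| = r := by
      rw [show x - r - x = -r by ring, abs_neg, abs_of_pos hr]
    have habs2 : |x + r - x| = r := by
      rw [show x + r - x = r by ring, abs_of_pos hr]
    have hcone : max |x + r - x| |x - r - x| / ((x + r) - (x - r)) ≤ c := by
      rw [habs1, habs2, max_self, show (x + r) - (x - r) = 2 * r by ring]
      have : r / (2 * r) = 1 / 2 := by field_simp
      rw [this]; exact hc
    have hbig := h1' (x - r) (x + r) hab hcone (by rw [habs1]; exact hr1)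
      (by rw [habs2]; exact hr1)
    have hIcc : Icc (x - r) (x + r) = Metric.closedBall x r := Real.closedBall_eq_Icc.symm
    rw [hIcc, show (x + r) - (x - r) = 2 * r by ring] at hbig
    have hsmall := hs r hr hr2
    set v := (volume (A ∩ Metric.closedBall x r)).toReal with hvdef
    rw [abs_lt] at hbig
    have hv : 1/2 < v / (2 * r) := by linarith [hbig.1]
    rw [lt_div_iff₀ (by linarith : (0:ℝ) < 2 * r)] at hv
    linarith
end

section
/- Let T = [t₀,ϑ], G ⊂ T × ℝⁿ compact, P ⊂ ℝ^p and Q ⊂ ℝ^q compact, and f : T × ℝⁿ × P × Q → ℝⁿ continuous. Let X be a set of functions x : T → ℝⁿ with graph in G satisfying the uniform Lipschitz bound ‖x(τ) − x(s)‖ ≤ κ|τ−s| where κ = max over G×P×Q of ‖f‖. Let v : T → Q be measurable and fix c ≥ 1/2. Then for almost every τ ∈ T: sup over u ∈ P and x ∈ X of ‖(1/(b−a)) ∫_{[a,b]} f(s, x(s), u, v(s)) ds − f(τ, x(τ), u, v(τ))‖ → 0 as a, b → τ, a,b ∈ T, along pairs (a,b) with b > a and max(|b−τ|,|a−τ|)/(b−a)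 ≤ c. -/
open MeasureTheory Set Filter intervalIntegral

set_option maxHeartbeats 2000000 in
/-- Lemma 2 of the paper: a uniform (over `u ∈ P` and over the equi-Lipschitz family
`X` of trajectories with graphs in the compact set `G`) cone Lebesgue-differentiation
statement for `s ↦ f(s, x s, u, v s)`. -/
theorem cone_lebesgue_point_uniform (t₀ ϑ : ℝ) (hT : t₀ ≤ ϑ)
    (n p q : ℕ)
    (G : Set (ℝ × EuclideanSpace ℝ (Fin n))) (hG : IsCompact G)
    (P : Set (EuclideanSpace ℝ (Fin p))) (hP : IsCompact P)
    (Q : Set (EuclideanSpace ℝ (Fin q))) (hQ : IsCompact Q)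
    (f : ℝ → EuclideanSpace ℝ (Fin n) → EuclideanSpace ℝ (Fin p) →
         EuclideanSpace ℝ (Fin q) → EuclideanSpace ℝ (Fin n))
    (hf : Continuous fun z : ℝ × EuclideanSpace ℝ (Fin n) × EuclideanSpace ℝ (Fin p) ×
         EuclideanSpace ℝ (Fin q) => f z.1 z.2.1 z.2.2.1 z.2.2.2)
    (κ : ℝ)
    (hκ : ∀ z ∈ G, ∀ u ∈ P, ∀ w ∈ Q, ‖f z.1 z.2 u w‖ ≤ κ)
    (X : Set (ℝ → EuclideanSpace ℝ (Fin n)))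
    (hXG : ∀ x ∈ X, ∀ τ ∈ Icc t₀ ϑ, (τ, x τ) ∈ G)
    (hXLip : ∀ x ∈ X, ∀ τ ∈ Icc t₀ ϑ, ∀ s ∈ Icc t₀ ϑ, ‖x τ - x s‖ ≤ κ * |τ - s|)
    (v : ℝ → EuclideanSpace ℝ (Fin q)) (hv : Measurable v)
    (hvQ : ∀ s ∈ Icc t₀ ϑ, v s ∈ Q)
    (c : ℝ) (hc : 1/2 ≤ c) :
    ∀ᵐ τ ∂(volume.restrict (Icc t₀ ϑ)),
      ∀ ε > 0, ∃ δ > 0, ∀ a b : ℝ, a ∈ Icc t₀ ϑ → b ∈ Icc t₀ ϑ → b > a →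
        max |b - τ| |a - τ| / (b - a) ≤ c → |a - τ| < δ → |b - τ| < δ →
        ∀ u ∈ P, ∀ x ∈ X,
          ‖(b - a)⁻¹ • (∫ s in a..b, f s (x s) u (v s)) - f τ (x τ) u (v τ)‖ < ε := by
  classical
  -- dispose of trivial cases
  rcases X.eq_empty_or_nonempty with hXe | ⟨x₀, hx₀⟩
  · refine Eventually.of_forall fun τ ε hε => ⟨1, one_pos, fun a b _ _ _ _ _ _ u hu x hx => ?_⟩
    rw [hXe] at hx; exact absurd hx (notMem_empty x)
  rcases P.eq_empty_or_nonempty with hPe | ⟨u₀, hu₀⟩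
  · refine Eventually.of_forall fun τ ε hε => ⟨1, one_pos, fun a b _ _ _ _ _ _ u hu x hx => ?_⟩
    rw [hPe] at hu; exact absurd hu (notMem_empty u)
  have ht₀T : t₀ ∈ Icc t₀ ϑ := ⟨le_refl _, hT⟩
  have hc0 : (0:ℝ) < c := lt_of_lt_of_le (by norm_num) hc
  -- κ is nonnegative
  have hκ0 : 0 ≤ κ :=
    le_trans (norm_nonneg _) (hκ (t₀, x₀ t₀) (hXG x₀ hx₀ t₀ ht₀T) u₀ hu₀ (v t₀) (hvQ t₀ ht₀T))
  -- the compact set where all arguments live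
  set Y : Set (EuclideanSpace ℝ (Fin n)) := Prod.snd '' G with hY
  have hYc : IsCompact Y := hG.image continuous_snd
  set K : Set (ℝ × EuclideanSpace ℝ (Fin n) × EuclideanSpace ℝ (Fin p) ×
      EuclideanSpace ℝ (Fin q)) := (Icc t₀ ϑ) ×ˢ (Y ×ˢ (P ×ˢ Q)) with hK
  have hKc : IsCompact K := isCompact_Icc.prod (hYc.prod (hP.prod hQ))
  set F : ℝ × EuclideanSpace ℝ (Fin n) × EuclideanSpace ℝ (Fin p) ×
      EuclideanSpace ℝ (Fin q) → EuclideanSpace ℝ (Fin n) :=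
    fun z => f z.1 z.2.1 z.2.2.1 z.2.2.2 with hF
  -- a bound for F on K
  obtain ⟨M₀, hM₀⟩ := hKc.exists_bound_of_continuousOn hf.continuousOn
  set M : ℝ := max M₀ 0 with hMdef
  have hM0 : 0 ≤ M := le_max_right _ _
  have hM : ∀ z ∈ K, ‖F z‖ ≤ M := fun z hz => le_trans (hM₀ z hz) (le_max_left _ _)
  -- uniform continuity of F on K
  have hUC : UniformContinuousOn F K := hKc.uniformContinuousOn_of_continuous hf.continuousOn
  -- the integrable extension of v
  set g : ℝ → EuclideanSpace ℝ (Fin q) := (Icc t₀ ϑ).indicator v with hgdef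
  obtain ⟨Mv, hMv⟩ := hQ.isBounded.subset_closedBall 0
  have hg : Integrable g volume := by
    rw [hgdef, integrable_indicator_iff measurableSet_Icc]
    refine Integrable.mono' (g := fun _ => max Mv 0)
      ((integrableOn_const_iff (C := max Mv 0)).2 (Or.inr measure_Icc_lt_top))
      (hv.aestronglyMeasurable.restrict) ?_
    filter_upwards [ae_restrict_mem measurableSet_Icc] with s hs
    exact le_trans (by simpa using mem_closedBall_zero_iff.1 (hMv (hvQ s hs))) (le_max_left _ _)
  -- Lebesgue differentiation at a.e. point
  have hLeb : ∀ᵐ τ ∂(volume : Measure ℝ),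
      Tendsto (fun r => ⨍ y in Metric.closedBall τ r, ‖g y - g τ‖)
        (nhdsWithin 0 (Ioi 0)) (nhds 0) := by
    filter_upwards [IsUnifLocDoublingMeasure.ae_tendsto_average_norm_sub
      (μ := (volume : Measure ℝ)) hg.locallyIntegrable 1] with τ hτ
    exact hτ (fun r => τ) id tendsto_id (by
      filter_upwards [self_mem_nhdsWithin] with r hr
      simpa using (le_of_lt hr))
  filter_upwards [ae_restrict_of_ae hLeb, ae_restrict_mem measurableSet_Icc] with τ hτLeb hτT
  intro ε hε
  -- modulus of uniform continuity
  obtain ⟨η, hη, hηuc⟩ := Metric.uniformContinuousOn_iff.1 hUC (ε/4) (by linarith)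
  set C₁ : ℝ := 2 * M / η with hC₁def
  have hC₁0 : 0 ≤ C₁ := div_nonneg (by linarith) hη.le
  set C₀ : ℝ := 2 * c * C₁ with hC₀def
  have hC₀0 : 0 ≤ C₀ := mul_nonneg (by linarith) hC₁0
  set ε' : ℝ := ε / (4 * (C₀ + 1)) with hε'def
  have hε'0 : 0 < ε' := div_pos hε (by linarith)
  -- choose δ₂ from the Lebesgue point property
  have hev : ∀ᶠ r in nhdsWithin 0 (Ioi 0),
      (⨍ y in Metric.closedBall τ r, ‖g y - g τ‖) < ε' :=
    hτLeb.eventually (Tendsto.eventually_lt_const hε'0 tendsto_id)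
  obtain ⟨δ₂, hδ₂pos, hδ₂⟩ := mem_nhdsGT_iff_exists_Ioc_subset.1 hev
  set δ₁ : ℝ := η / (1 + κ) with hδ₁def
  have hδ₁pos : 0 < δ₁ := div_pos hη (by linarith)
  refine ⟨min δ₁ δ₂, lt_min hδ₁pos hδ₂pos, fun a b haT hbT hab hcone haδ hbδ u hu x hx => ?_⟩
  have hba : (0:ℝ) < b - a := by linarith
  have hableq : a ≤ b := by linarith
  set r : ℝ := max |b - τ| |a - τ| with hrdef
  have hrb : |b - τ| ≤ r := le_max_left _ _
  have hra : |a - τ| ≤ r := le_max_right _ _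
  have hr2 : b - a ≤ 2 * r := by
    have h1 : b - τ ≤ |b - τ| := le_abs_self _
    have h2 : τ - a ≤ |a - τ| := by rw [abs_sub_comm]; exact le_abs_self _
    linarith
  have hrpos : 0 < r := by linarith
  have hrc : r ≤ c * (b - a) := by
    have := (div_le_iff₀ hba).1 hcone; linarith
  have hrδ : r < min δ₁ δ₂ := max_lt hbδ haδ
  have hrδ₁ : r < δ₁ := lt_of_lt_of_le hrδ (min_le_left _ _)
  have hrδ₂ : r < δ₂ := lt_of_lt_of_le hrδ (min_le_right _ _)
  have hIccT : Icc a b ⊆ Icc t₀ ϑ := Icc_subset_Icc haT.1 hbT.2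
  have hIccBall : Icc a b ⊆ Metric.closedBall τ r := by
    intro s hs
    rw [Metric.mem_closedBall, Real.dist_eq, abs_le]
    constructor
    · have : -(|a - τ|) ≤ a - τ := neg_abs_le _
      linarith [hs.1]
    · have : b - τ ≤ |b - τ| := le_abs_self _
      linarith [hs.2]
  -- membership of the arguments in K
  have hmemK : ∀ s ∈ Icc t₀ ϑ, ∀ w ∈ Q, (s, x s, u, w) ∈ K := by
    intro s hs w hw
    exact ⟨hs, ⟨(s, x s), hXG x hx s hs, rfl⟩, hu, hw⟩
  -- continuity of x on the time interval
  have hxLip : LipschitzOnWith (Real.toNNReal κ) x (Icc t₀ ϑ) := by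
    apply LipschitzOnWith.of_dist_le_mul
    intro s hs t ht
    rw [dist_eq_norm, Real.dist_eq, Real.coe_toNNReal κ hκ0]
    exact hXLip x hx s hs t ht
  have hxc : ContinuousOn x (Icc t₀ ϑ) := hxLip.continuousOn
  -- the three functions
  set h₁ : ℝ → EuclideanSpace ℝ (Fin n) := fun s => f s (x s) u (v s) with hh₁
  set h₂ : ℝ → EuclideanSpace ℝ (Fin n) := fun s => f τ (x τ) u (v s) with hh₂
  set C : EuclideanSpace ℝ (Fin n) := f τ (x τ) u (v τ) with hCdef
  -- measurability
  have hmeas : ∀ (y₁ : ℝ) (y₂ : EuclideanSpace ℝ (Fin n)),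
      ((y₁, y₂) ∈ G ∨ True) → True := fun _ _ _ => trivial
  have hargmeas : AEStronglyMeasurable (fun s => (s, x s, u, v s))
      (volume.restrict (Icc t₀ ϑ)) :=
    aestronglyMeasurable_id.prodMk ((hxc.aestronglyMeasurable measurableSet_Icc).prodMk
      (aestronglyMeasurable_const.prodMk hv.aestronglyMeasurable.restrict))
  have hrestr : volume.restrict (Ioc a b) ≤ volume.restrict (Icc t₀ ϑ) :=
    Measure.restrict_mono (subset_trans Ioc_subset_Icc_self hIccT) (le_refl _)
  have h₁meas : AEStronglyMeasurable h₁ (volume.restrict (Ioc a b)) :=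
    hf.comp_aestronglyMeasurable (hargmeas.mono_measure hrestr)
  have h₂meas : AEStronglyMeasurable h₂ (volume.restrict (Ioc a b)) :=
    hf.comp_aestronglyMeasurable
      ((aestronglyMeasurable_const.prodMk (aestronglyMeasurable_const.prodMk
        (aestronglyMeasurable_const.prodMk
          hv.aestronglyMeasurable.restrict))).mono_measure hrestr)
  -- integrability
  have hboundint : ∀ (h : ℝ → EuclideanSpace ℝ (Fin n)),
      AEStronglyMeasurable h (volume.restrict (Ioc a b)) →
      (∀ s ∈ Ioc a b, ‖h s‖ ≤ M) → IntervalIntegrable h volume a b := by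
    intro h hmeas hbd
    rw [intervalIntegrable_iff_integrableOn_Ioc_of_le hableq]
    refine Integrable.mono' (g := fun _ => M)
      ((integrableOn_const_iff (C := M)).2 (Or.inr measure_Ioc_lt_top)) hmeas ?_
    filter_upwards [ae_restrict_mem measurableSet_Ioc] with s hs
    exact hbd s hs
  have h₁int : IntervalIntegrable h₁ volume a b := by
    refine hboundint h₁ h₁meas fun s hs => ?_
    have hsT := hIccT (Ioc_subset_Icc_self hs)
    show ‖f s (x s) u (v s)‖ ≤ M
    exact hM (s, x s, u, v s) (hmemK s hsT (v s) (hvQ s hsT))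
  have h₂int : IntervalIntegrable h₂ volume a b := by
    refine hboundint h₂ h₂meas fun s hs => ?_
    have hsT := hIccT (Ioc_subset_Icc_self hs)
    show ‖f τ (x τ) u (v s)‖ ≤ M
    exact hM (τ, x τ, u, v s) (hmemK τ hτT (v s) (hvQ s hsT))
  have hCint : IntervalIntegrable (fun _ => C) volume a b := intervalIntegrable_const
  have hgball : IntegrableOn (fun y => ‖g y - g τ‖) (Metric.closedBall τ r) volume :=
    ((hg.integrableOn).sub ((integrableOn_const_iff (C := g τ)).2
      (Or.inr measure_closedBall_lt_top))).norm
  have hgIoc : IntegrableOn (fun y => ‖g y - g τ‖) (Ioc a b) volume :=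
    hgball.mono_set (subset_trans Ioc_subset_Icc_self hIccBall)
  have hgint : IntervalIntegrable (fun y => ‖g y - g τ‖) volume a b := by
    rw [intervalIntegrable_iff_integrableOn_Ioc_of_le hableq]; exact hgIoc
  -- pointwise bounds
  have hbound₁ : ∀ s ∈ Icc a b, ‖h₁ s - h₂ s‖ ≤ ε / 4 := by
    intro s hs
    have hsT : s ∈ Icc t₀ ϑ := hIccT hs
    have hsτ : |s - τ| < δ₁ := by
      refine lt_of_le_of_lt ?_ hrδ₁
      rcases abs_le.1 (le_refl |s - τ|) with _
      rw [abs_le]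
      have h1 : -(|a - τ|) ≤ a - τ := neg_abs_le _
      have h2 : b - τ ≤ |b - τ| := le_abs_self _
      constructor <;> [linarith [hs.1, hra]; linarith [hs.2, hrb]]
    have hz1 : (s, x s, u, v s) ∈ K := hmemK s hsT (v s) (hvQ s hsT)
    have hz2 : (τ, x τ, u, v s) ∈ K := hmemK τ hτT (v s) (hvQ s hsT)
    have hdist : dist ((s, x s, u, v s)) ((τ, x τ, u, v s)) < η := by
      have h1 : dist s τ = |s - τ| := Real.dist_eq s τ
      have h2 : dist (x s) (x τ) ≤ κ * |s - τ| := by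
        rw [dist_eq_norm]; exact hXLip x hx s hsT τ hτT
      calc dist ((s, x s, u, v s)) ((τ, x τ, u, v s))
          ≤ max (dist s τ) (max (dist (x s) (x τ)) (max (dist u u) (dist (v s) (v s)))) := by
            rw [Prod.dist_eq, Prod.dist_eq, Prod.dist_eq]
        _ ≤ (1 + κ) * |s - τ| := by
            simp only [dist_self, h1]
            refine max_le (by nlinarith [abs_nonneg (s - τ)]) (max_le ?_ ?_)
            · nlinarith [abs_nonneg (s - τ), h2]
            · simp; positivity
        _ < (1 + κ) * δ₁ := by
            apply mul_lt_mul_of_pos_left hsτ (by linarith)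
        _ = η := by rw [hδ₁def]; field_simp
    have := hηuc _ hz1 _ hz2 hdist
    rw [dist_eq_norm] at this
    exact this.le
  have hbound₂ : ∀ s ∈ Icc a b, ‖h₂ s - C‖ ≤ ε / 4 + C₁ * ‖g s - g τ‖ := by
    intro s hs
    have hsT : s ∈ Icc t₀ ϑ := hIccT hs
    have hgs : g s = v s := indicator_of_mem hsT v
    have hgτ : g τ = v τ := indicator_of_mem hτT v
    have hz2 : (τ, x τ, u, v s) ∈ K := hmemK τ hτT (v s) (hvQ s hsT)
    have hz3 : (τ, x τ, u, v τ) ∈ K := hmemK τ hτT (v τ) (hvQ τ hτT)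
    by_cases hd : dist (v s) (v τ) < η
    · have hdist : dist ((τ, x τ, u, v s)) ((τ, x τ, u, v τ)) < η := by
        calc dist ((τ, x τ, u, v s)) ((τ, x τ, u, v τ))
            ≤ max (dist τ τ) (max (dist (x τ) (x τ)) (max (dist u u) (dist (v s) (v τ)))) := by
              rw [Prod.dist_eq, Prod.dist_eq, Prod.dist_eq]
          _ = dist (v s) (v τ) := by simp [dist_nonneg]
          _ < η := hd
      have := hηuc _ hz2 _ hz3 hdist
      rw [dist_eq_norm] at this
      have hn : 0 ≤ C₁ * ‖g s - g τ‖ := mul_nonneg hC₁0 (norm_nonneg _)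
      linarith
    · push_neg at hd
      have hh2 : ‖h₂ s‖ ≤ M := hM (τ, x τ, u, v s) hz2
      have hhC : ‖C‖ ≤ M := hM (τ, x τ, u, v τ) hz3
      have h2M : ‖h₂ s - C‖ ≤ 2 * M := by
        calc ‖h₂ s - C‖ ≤ ‖h₂ s‖ + ‖C‖ := norm_sub_le _ _
          _ ≤ M + M := add_le_add hh2 hhC
          _ = 2 * M := by ring
      have : 2 * M ≤ C₁ * ‖g s - g τ‖ := by
        rw [hgs, hgτ, ← dist_eq_norm, hC₁def]
        rw [div_mul_eq_mul_div, le_div_iff₀ hη]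
        nlinarith
      have hε4 : (0:ℝ) ≤ ε / 4 := by linarith
      linarith
  -- the decomposition
  have hneC : (b - a) ≠ 0 := hba.ne'
  have key : (b - a)⁻¹ • (∫ s in a..b, h₁ s) - C
      = (b - a)⁻¹ • (∫ s in a..b, (h₁ s - h₂ s)) + (b - a)⁻¹ • (∫ s in a..b, (h₂ s - C)) := by
    rw [← smul_add, ← intervalIntegral.integral_add (h₁int.sub h₂int) (h₂int.sub hCint)]
    have heq : (∫ s in a..b, (h₁ s - h₂ s + (h₂ s - C))) = (∫ s in a..b, (h₁ s - C)) := by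
      congr 1; funext s; abel
    rw [heq, intervalIntegral.integral_sub h₁int hCint, intervalIntegral.integral_const,
      smul_sub, smul_smul, inv_mul_cancel₀ hneC, one_smul]
  rw [key]
  -- bound for the first term
  have hT₁ : ‖(b - a)⁻¹ • (∫ s in a..b, (h₁ s - h₂ s))‖ ≤ ε / 4 := by
    rw [norm_smul, norm_inv, Real.norm_eq_abs, abs_of_pos hba]
    have := intervalIntegral.norm_integral_le_of_norm_le_const
      (C := ε / 4) (f := fun s => h₁ s - h₂ s) (a := a) (b := b) ?_
    · rw [abs_of_pos hba] at this
      calc (b - a)⁻¹ * ‖∫ s in a..b, (h₁ s - h₂ s)‖ ≤ (b - a)⁻¹ * (ε / 4 * (b - a)) := by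
            apply mul_le_mul_of_nonneg_left this (by positivity)
        _ = ε / 4 := by field_simp
    · intro s hs
      rw [uIoc_of_le hableq] at hs
      exact hbound₁ s (Ioc_subset_Icc_self hs)
  -- bound for the second term
  have hIball : (∫ s in a..b, ‖g s - g τ‖) ≤ ∫ y in Metric.closedBall τ r, ‖g y - g τ‖ := by
    rw [intervalIntegral.integral_of_le hableq]
    refine setIntegral_mono_set hgball ?_ ?_
    · filter_upwards with y using norm_nonneg _
    · exact HasSubset.Subset.eventuallyLE (subset_trans Ioc_subset_Icc_self hIccBall)
  have havg : (⨍ y in Metric.closedBall τ r, ‖g y - g τ‖) < ε' :=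
    hδ₂ ⟨hrpos, hrδ₂.le⟩
  have havg0 : 0 ≤ ⨍ y in Metric.closedBall τ r, ‖g y - g τ‖ := by
    rw [setAverage_eq]
    exact smul_nonneg (by positivity) (integral_nonneg fun y => norm_nonneg _)
  have hIeq : (∫ y in Metric.closedBall τ r, ‖g y - g τ‖)
      = (2 * r) * ⨍ y in Metric.closedBall τ r, ‖g y - g τ‖ := by
    rw [setAverage_eq, measureReal_def, Real.volume_closedBall, ENNReal.toReal_ofReal (by linarith)]
    rw [smul_eq_mul, ← mul_assoc, mul_inv_cancel₀ (by positivity), one_mul]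
  have hT₂ : ‖(b - a)⁻¹ • (∫ s in a..b, (h₂ s - C))‖
      ≤ ε / 4 + (b - a)⁻¹ * (C₁ * ((2 * r) * ⨍ y in Metric.closedBall τ r, ‖g y - g τ‖)) := by
    rw [norm_smul, norm_inv, Real.norm_eq_abs, abs_of_pos hba]
    have h1 : ‖∫ s in a..b, (h₂ s - C)‖ ≤ ∫ s in a..b, ‖h₂ s - C‖ :=
      intervalIntegral.norm_integral_le_integral_norm hableq
    have h2 : (∫ s in a..b, ‖h₂ s - C‖) ≤ ∫ s in a..b, (ε / 4 + C₁ * ‖g s - g τ‖) := by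
      refine intervalIntegral.integral_mono_on hableq ?_ ?_ hbound₂
      · exact (h₂int.sub hCint).norm
      · exact intervalIntegrable_const.add (hgint.const_mul C₁)
    have h3 : (∫ s in a..b, (ε / 4 + C₁ * ‖g s - g τ‖))
        = ε / 4 * (b - a) + C₁ * ∫ s in a..b, ‖g s - g τ‖ := by
      rw [intervalIntegral.integral_add intervalIntegrable_const (hgint.const_mul C₁),
        intervalIntegral.integral_const, intervalIntegral.integral_const_mul]
      simp [smul_eq_mul, mul_comm]
    have h4 : C₁ * (∫ s in a..b, ‖g s - g τ‖) ≤ C₁ * ((2 * r) * ⨍ y in Metric.closedBall τ r,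
        ‖g y - g τ‖) := by
      rw [← hIeq]; exact mul_le_mul_of_nonneg_left hIball hC₁0
    calc (b - a)⁻¹ * ‖∫ s in a..b, (h₂ s - C)‖
        ≤ (b - a)⁻¹ * (ε / 4 * (b - a) + C₁ * ((2 * r) * ⨍ y in Metric.closedBall τ r,
            ‖g y - g τ‖)) := by
          apply mul_le_mul_of_nonneg_left _ (by positivity)
          calc ‖∫ s in a..b, (h₂ s - C)‖ ≤ ∫ s in a..b, ‖h₂ s - C‖ := h1
            _ ≤ ∫ s in a..b, (ε / 4 + C₁ * ‖g s - g τ‖) := h2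
            _ = ε / 4 * (b - a) + C₁ * ∫ s in a..b, ‖g s - g τ‖ := h3
            _ ≤ ε / 4 * (b - a) + C₁ * ((2 * r) * ⨍ y in Metric.closedBall τ r,
                  ‖g y - g τ‖) := by linarith
      _ = ε / 4 + (b - a)⁻¹ * (C₁ * ((2 * r) * ⨍ y in Metric.closedBall τ r, ‖g y - g τ‖)) := by
          rw [mul_add]; congr 1; field_simp
  -- final arithmetic
  have hlast : (b - a)⁻¹ * (C₁ * ((2 * r) * ⨍ y in Metric.closedBall τ r, ‖g y - g τ‖))
      ≤ C₀ * ε' := by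
    set A := ⨍ y in Metric.closedBall τ r, ‖g y - g τ‖ with hA
    have h2r : (b - a)⁻¹ * (2 * r) ≤ 2 * c := by
      rw [inv_mul_le_iff₀ hba]; linarith
    have hAε' : A ≤ ε' := havg.le
    calc (b - a)⁻¹ * (C₁ * (2 * r * A)) = ((b - a)⁻¹ * (2 * r)) * (C₁ * A) := by ring
      _ ≤ (2 * c) * (C₁ * A) := by
          apply mul_le_mul_of_nonneg_right h2r (mul_nonneg hC₁0 havg0)
      _ ≤ (2 * c) * (C₁ * ε') := by
          apply mul_le_mul_of_nonneg_left (mul_le_mul_of_nonneg_left hAε' hC₁0) (by linarith)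
      _ = C₀ * ε' := by rw [hC₀def]; ring
  have hC₀ε' : C₀ * ε' ≤ ε / 4 := by
    have h4 : (0:ℝ) < 4 * (C₀ + 1) := by linarith
    rw [hε'def, mul_comm, div_mul_eq_mul_div, div_le_div_iff₀ h4 (by norm_num)]
    nlinarith [mul_nonneg hε.le hC₀0]
  calc ‖(b - a)⁻¹ • (∫ s in a..b, (h₁ s - h₂ s)) + (b - a)⁻¹ • (∫ s in a..b, (h₂ s - C))‖
      ≤ ‖(b - a)⁻¹ • (∫ s in a..b, (h₁ s - h₂ s))‖
        + ‖(b - a)⁻¹ • (∫ s in a..b, (h₂ s - C))‖ := norm_add_le _ _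
    _ ≤ ε / 4 + (ε / 4 + (b - a)⁻¹ * (C₁ * ((2 * r) * ⨍ y in Metric.closedBall τ r,
          ‖g y - g τ‖))) := add_le_add hT₁ hT₂
    _ ≤ ε / 4 + (ε / 4 + C₀ * ε') := by linarith
    _ ≤ ε / 4 + (ε / 4 + ε / 4) := by linarith
    _ < ε := by linarith
end

section
/- Every partition Δ = (τ_i)_{i=0}^{n} of an interval [t₀, ϑ] (with τ₀ = t₀ < τ₁ < … < τ_n = ϑ) admits a subpartition Δ′ ⊆ Δ (obtained by removing some interior points) such that diam(Δ′)/diamin(Δ′) ≤ 3 and diam(Δ′) ≤ 3·diam(Δ), where diam denotes the maximal step τ_i − τ_{i−1} of the partition and diamin denotes the minimal step among the steps τ_i − τ_{i−1} for i from 1 to n−1. -/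
open Set

/-- The maximal step `max_{1 ≤ i ≤ n} (σ i − σ (i-1))` of a partition with points
`σ 0, …, σ n`. -/
noncomputable def pdiam (n : ℕ) (σ : ℕ → ℝ) : ℝ :=
  sSup {d : ℝ | ∃ i < n, d = σ (i + 1) - σ i}

/-- The minimal step among the steps `σ i − σ (i-1)` for `i` from `1` to `n−1`
(the last step is excluded). -/
noncomputable def pdiamin (n : ℕ) (σ : ℕ → ℝ) : ℝ :=
  sInf {d : ℝ | ∃ i, i + 1 < n ∧ d = σ (i + 1) - σ i}

open Classical in
/-- The smallest index `j > i` with `τ j - τ i > d` or `j = n`. -/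
noncomputable def nextIdx (n : ℕ) (τ : ℕ → ℝ) (d : ℝ) (i : ℕ) : ℕ :=
  if h : i < n then
    Nat.find (p := fun j => i < j ∧ j ≤ n ∧ (d < τ j - τ i ∨ j = n))
      ⟨n, h, le_refl n, Or.inr rfl⟩
  else n

open Classical in
lemma nextIdx_spec (n : ℕ) (τ : ℕ → ℝ) (d : ℝ) (i : ℕ) (h : i < n) :
    i < nextIdx n τ d i ∧ nextIdx n τ d i ≤ n ∧
      (d < τ (nextIdx n τ d i) - τ i ∨ nextIdx n τ d i = n) := by
  rw [nextIdx, dif_pos h]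
  exact Nat.find_spec (p := fun j => i < j ∧ j ≤ n ∧ (d < τ j - τ i ∨ j = n)) _

open Classical in
lemma nextIdx_min (n : ℕ) (τ : ℕ → ℝ) (d : ℝ) (i : ℕ) (h : i < n) {j : ℕ}
    (hj : j < nextIdx n τ d i) :
    ¬(i < j ∧ j ≤ n ∧ (d < τ j - τ i ∨ j = n)) := by
  rw [nextIdx, dif_pos h] at hj
  exact Nat.find_min (p := fun j => i < j ∧ j ≤ n ∧ (d < τ j - τ i ∨ j = n)) _ hj

lemma nextIdx_of_eq (n : ℕ) (τ : ℕ → ℝ) (d : ℝ) : nextIdx n τ d n = n := by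
  rw [nextIdx, dif_neg (lt_irrefl n)]

/-- The greedy chain of indices. -/
noncomputable def chain (n : ℕ) (τ : ℕ → ℝ) (d : ℝ) : ℕ → ℕ
  | 0 => 0
  | k + 1 => nextIdx n τ d (chain n τ d k)

/-- Every partition `Δ = (τ_i)_{i=0}^n` of `[t₀, ϑ]` can be thinned out to a
subpartition `Δ' ⊆ Δ` with `diam Δ' / diamin Δ' ≤ 3` and `diam Δ' ≤ 3 diam Δ`. -/
theorem partition_thinning (t₀ ϑ : ℝ) (n : ℕ) (hn : 1 ≤ n) (τ : ℕ → ℝ)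
    (hmono : ∀ i < n, τ i < τ (i + 1)) (h0 : τ 0 = t₀) (hend : τ n = ϑ) :
    ∃ (m : ℕ) (σ : ℕ → ℝ), 1 ≤ m ∧
      (∀ i < m, σ i < σ (i + 1)) ∧ σ 0 = t₀ ∧ σ m = ϑ ∧
      (∀ i ≤ m, ∃ j ≤ n, σ i = τ j) ∧
      (2 ≤ m → pdiam m σ ≤ 3 * pdiamin m σ) ∧
      pdiam m σ ≤ 3 * pdiam n τ := by
  classical
  set d := pdiam n τ with hd
  -- boundedness of the step set
  have hbdd : BddAbove {e : ℝ | ∃ i < n, e = τ (i + 1) - τ i} := by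
    apply Set.Finite.bddAbove
    apply Set.Finite.subset ((Set.finite_Iio n).image (fun i => τ (i + 1) - τ i))
    rintro e ⟨i, hi, rfl⟩
    exact ⟨i, hi, rfl⟩
  have hstep_le : ∀ i < n, τ (i + 1) - τ i ≤ d := by
    intro i hi
    exact le_csSup hbdd ⟨i, hi, rfl⟩
  have hd_pos : 0 < d := by
    have h1 : 0 < τ 1 - τ 0 := sub_pos.2 (hmono 0 (by omega))
    exact lt_of_lt_of_le h1 (hstep_le 0 (by omega))
  -- strict monotonicity of τ up to n
  have hτmono : ∀ j, j ≤ n → ∀ i < j, τ i < τ j := by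
    intro j
    induction j with
    | zero => intro _ i hi; omega
    | succ k ih =>
      intro hk i hi
      rcases Nat.lt_succ_iff_lt_or_eq.mp hi with h | h
      · exact (ih (by omega) i h).trans (hmono k (by omega))
      · subst h; exact hmono i (by omega)
  set g := chain n τ d with hg
  have hg0 : g 0 = 0 := rfl
  have hgsucc : ∀ k, g (k + 1) = nextIdx n τ d (g k) := fun k => rfl
  have hg_le : ∀ k, g k ≤ n := by
    intro k
    induction k with
    | zero => omega
    | succ k ih =>
      rw [hgsucc]
      by_cases h : g k < n
      · exact (nextIdx_spec n τ d (g k) h).2.1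
      · have : g k = n := le_antisymm ih (not_lt.mp h)
        rw [this, nextIdx_of_eq]
  have hreach : g n = n := by
    have key : ∀ k, k ≤ g k ∨ g k = n := by
      intro k
      induction k with
      | zero => left; omega
      | succ k ih =>
        rcases ih with h | h
        · by_cases hk : g k < n
          · left
            have := (nextIdx_spec n τ d (g k) hk).1
            rw [hgsucc]; omega
          · right
            have hkn : g k = n := le_antisymm (hg_le k) (not_lt.mp hk)
            rw [hgsucc, hkn, nextIdx_of_eq]
        · right; rw [hgsucc, h, nextIdx_of_eq]
    rcases key n with h | h
    · exact le_antisymm (hg_le n) h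
    · exact h
  have hex : ∃ m, g m = n := ⟨n, hreach⟩
  obtain ⟨m, hm_eq, hm_min⟩ : ∃ m, g m = n ∧ ∀ k < m, g k ≠ n :=
    ⟨Nat.find hex, Nat.find_spec hex, fun k hk => Nat.find_min hex hk⟩
  have hm1 : 1 ≤ m := by
    rcases Nat.eq_zero_or_pos m with h | h
    · exfalso; rw [h, hg0] at hm_eq; omega
    · exact h
  have hg_lt : ∀ k < m, g k < n := fun k hk =>
    lt_of_le_of_ne (hg_le k) (hm_min k hk)
  -- upper bound on steps of the chain
  have hstep_ub : ∀ k < m, τ (g (k + 1)) - τ (g k) ≤ 2 * d := by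
    intro k hk
    have hi : g k < n := hg_lt k hk
    have hspec := nextIdx_spec n τ d (g k) hi
    rw [← hgsucc] at hspec
    rcases Nat.lt_or_ge (g k + 1) (g (k + 1)) with h | h
    · -- use minimality at g (k+1) - 1
      have hj1 : g (k + 1) - 1 < g (k + 1) := by omega
      have hmin := nextIdx_min n τ d (g k) hi (j := g (k + 1) - 1) (by rw [← hgsucc]; exact hj1)
      push_neg at hmin
      have h1 : τ (g (k + 1) - 1) - τ (g k) ≤ d ∧ g (k + 1) - 1 ≠ n := by
        have hlt : g k < g (k + 1) - 1 := by omega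
        have hle : g (k + 1) - 1 ≤ n := by have := hg_le (k + 1); omega
        exact hmin hlt hle
      have hlt_n : g (k + 1) - 1 < n := lt_of_le_of_ne (by have := hg_le (k + 1); omega) h1.2
      have h2 : τ (g (k + 1) - 1 + 1) - τ (g (k + 1) - 1) ≤ d := hstep_le _ hlt_n
      have heq : g (k + 1) - 1 + 1 = g (k + 1) := by omega
      rw [heq] at h2
      linarith [h1.1]
    · have heq : g (k + 1) = g k + 1 := le_antisymm h hspec.1
      rw [heq]
      have := hstep_le (g k) hi
      linarith
  -- lower bound on interior steps of the chain
  have hstep_lb : ∀ k, k + 1 < m → d < τ (g (k + 1)) - τ (g k) := by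
    intro k hk
    have hi : g k < n := hg_lt k (by omega)
    have hspec := nextIdx_spec n τ d (g k) hi
    rw [← hgsucc] at hspec
    rcases hspec.2.2 with h | h
    · exact h
    · exact absurd h (hm_min (k + 1) hk)
  refine ⟨m, fun k => τ (g k), hm1, ?_, ?_, ?_, ?_, ?_, ?_⟩
  · intro i hi
    have h1 : g i < g (i + 1) := by
      have := (nextIdx_spec n τ d (g i) (hg_lt i hi)).1
      rw [← hgsucc] at this; exact this
    exact hτmono (g (i + 1)) (hg_le (i + 1)) (g i) h1
  · show τ (g 0) = t₀
    rw [hg0, h0]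
  · show τ (g m) = ϑ
    rw [hm_eq, hend]
  · intro i _; exact ⟨g i, hg_le i, rfl⟩
  · intro hm2
    have hdiam : pdiam m (fun k => τ (g k)) ≤ 2 * d := by
      rw [pdiam]
      apply csSup_le
      · exact ⟨τ (g 1) - τ (g 0), 0, hm1, rfl⟩
      · rintro e ⟨i, hi, rfl⟩
        exact hstep_ub i hi
    have hdiamin : d ≤ pdiamin m (fun k => τ (g k)) := by
      rw [pdiamin]
      apply le_csInf
      · exact ⟨τ (g 1) - τ (g 0), 0, by omega, rfl⟩
      · rintro e ⟨i, hi, rfl⟩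
        exact le_of_lt (hstep_lb i hi)
    linarith
  · have hdiam : pdiam m (fun k => τ (g k)) ≤ 2 * d := by
      rw [pdiam]
      apply csSup_le
      · exact ⟨τ (g 1) - τ (g 0), 0, hm1, rfl⟩
      · rintro e ⟨i, hi, rfl⟩
        exact hstep_ub i hi
    linarith
end

section
/- Consider the control system on T = [0,1]: ẋ₁ = u₁·v₁, ẋ₂ = max{0, x₁}·u₂·v₂ with x(0) = (0,0), where controls (u₁(τ), u₂(τ)) ∈ [−1,1]² and disturbances (v₁(τ), v₂(τ)) ∈ {−1,1}² are measurable functions of time, and the cost is γ(x(·)) = x₂(1). Then there exists a non-anticipatory quasi-strategy α (mapping disturbances v(·) to controls u(·) such that v = v′ on [0,τ] implies α(v) = α(v′) on [0,τ]) whose guaranteed result satisfies sup over disturbances v(·) of x₂(1; α(v), v) ≤ −1/2 + ε for every ε > 0; moreover no quasi-strategy guarantees a value below −1/2, so the optimal guaranteed result in the class of quasi-strategies equals −1/2. -/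
open MeasureTheory Set intervalIntegral

/-- Admissible disturbances: measurable with values in `{-1,1}²`. -/
def IsDisturbance (v : ℝ → ℝ × ℝ) : Prop :=
  Measurable v ∧ ∀ s, ((v s).1 = -1 ∨ (v s).1 = 1) ∧ ((v s).2 = -1 ∨ (v s).2 = 1)

/-- Admissible controls: measurable with values in `[-1,1]²`. -/
def IsControl (u : ℝ → ℝ × ℝ) : Prop :=
  Measurable u ∧ ∀ s, |(u s).1| ≤ 1 ∧ |(u s).2| ≤ 1

/-- First coordinate of the trajectory: `x₁(τ) = ∫₀^τ u₁ v₁`. -/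
noncomputable def traj1 (u v : ℝ → ℝ × ℝ) (τ : ℝ) : ℝ :=
  ∫ r in (0:ℝ)..τ, (u r).1 * (v r).1

/-- The cost `x₂(1) = ∫₀¹ max{0, x₁(s)} u₂(s) v₂(s) ds`. -/
noncomputable def cost (u v : ℝ → ℝ × ℝ) : ℝ :=
  ∫ s in (0:ℝ)..1, max 0 (traj1 u v s) * (u s).2 * (v s).2

/-- Non-anticipativity of a quasi-strategy: coincidence of disturbances on `[0,τ]`
implies coincidence of the controls on `[0,τ]`. -/
def NonAnticipatory (α : (ℝ → ℝ × ℝ) → (ℝ → ℝ × ℝ)) : Prop :=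
  ∀ τ ∈ Icc (0:ℝ) 1, ∀ v v' : ℝ → ℝ × ℝ, IsDisturbance v → IsDisturbance v' →
    (∀ s ∈ Icc (0:ℝ) τ, v s = v' s) → ∀ s ∈ Icc (0:ℝ) τ, α v s = α v' s

/-! ### Auxiliary lemmas -/

lemma bdd_ii (f : ℝ → ℝ) (hf : Measurable f) (C : ℝ) (hb : ∀ x, |f x| ≤ C) (a b : ℝ) :
    IntervalIntegrable f volume a b :=
  IntervalIntegrable.mono_fun' (g := fun _ => C) intervalIntegrable_const
    hf.aestronglyMeasurable.restrict (ae_of_all _ hb)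

lemma disturbance_abs (v : ℝ → ℝ × ℝ) (hv : IsDisturbance v) (s : ℝ) :
    |(v s).1| = 1 ∧ |(v s).2| = 1 := by
  rcases hv.2 s with ⟨h1, h2⟩
  constructor
  · rcases h1 with h | h <;> rw [h] <;> norm_num
  · rcases h2 with h | h <;> rw [h] <;> norm_num

lemma uv1_meas (u v : ℝ → ℝ × ℝ) (hu : IsControl u) (hv : IsDisturbance v) :
    Measurable fun r => (u r).1 * (v r).1 :=
  (measurable_fst.comp hu.1).mul (measurable_fst.comp hv.1)

lemma uv1_bd (u v : ℝ → ℝ × ℝ) (hu : IsControl u) (hv : IsDisturbance v) (r : ℝ) :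
    |(u r).1 * (v r).1| ≤ 1 := by
  rw [abs_mul, (disturbance_abs v hv r).1, mul_one]
  exact (hu.2 r).1

lemma traj1_abs_le (u v : ℝ → ℝ × ℝ) (hu : IsControl u) (hv : IsDisturbance v)
    {s : ℝ} (hs : 0 ≤ s) : |traj1 u v s| ≤ s := by
  have := intervalIntegral.norm_integral_le_of_norm_le_const (C := 1)
    (f := fun r => (u r).1 * (v r).1) (a := (0:ℝ)) (b := s)
    (fun x _ => uv1_bd u v hu hv x)
  simpa [traj1, abs_of_nonneg hs, Real.norm_eq_abs] using this

lemma traj1_cont (u v : ℝ → ℝ × ℝ) (hu : IsControl u) (hv : IsDisturbance v) :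
    Continuous (traj1 u v) :=
  intervalIntegral.continuous_primitive
    (fun a b => bdd_ii _ (uv1_meas u v hu hv) 1 (uv1_bd u v hu hv) a b) 0

lemma cost_integrand_ii (u v : ℝ → ℝ × ℝ) (hu : IsControl u) (hv : IsDisturbance v)
    (a b : ℝ) :
    IntervalIntegrable (fun s => max 0 (traj1 u v s) * (u s).2 * (v s).2) volume a b := by
  have hm : Measurable fun s => max 0 (traj1 u v s) * (u s).2 * (v s).2 :=
    (((continuous_const.max (traj1_cont u v hu hv)).measurable).mul
      (measurable_snd.comp hu.1)).mul (measurable_snd.comp hv.1)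
  have hC : Continuous fun s => max 0 (traj1 u v s) := continuous_const.max (traj1_cont u v hu hv)
  apply IntervalIntegrable.mono_fun' (g := fun s => max 0 (traj1 u v s))
  · exact (hC.intervalIntegrable a b)
  · exact hm.aestronglyMeasurable.restrict
  · apply ae_of_all
    intro s
    have h0 : (0:ℝ) ≤ max 0 (traj1 u v s) := le_max_left _ _
    calc ‖max 0 (traj1 u v s) * (u s).2 * (v s).2‖
        = max 0 (traj1 u v s) * |(u s).2| * |(v s).2| := by
          rw [Real.norm_eq_abs, abs_mul, abs_mul, abs_of_nonneg h0]
      _ ≤ max 0 (traj1 u v s) * 1 * 1 := by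
          apply mul_le_mul (mul_le_mul le_rfl (hu.2 s).2 (abs_nonneg _) h0)
            (le_of_eq (disturbance_abs v hv s).2) (abs_nonneg _)
            (by positivity)
      _ = max 0 (traj1 u v s) := by ring

/-- The cost is always at least `-1/2`. -/
lemma cost_ge (u v : ℝ → ℝ × ℝ) (hu : IsControl u) (hv : IsDisturbance v) :
    -1/2 ≤ cost u v := by
  have key : ∀ s ∈ Icc (0:ℝ) 1, -s ≤ max 0 (traj1 u v s) * (u s).2 * (v s).2 := by
    intro s hs
    have h1 : |max 0 (traj1 u v s) * (u s).2 * (v s).2| ≤ s := by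
      rw [abs_mul, abs_mul, (disturbance_abs v hv s).2, mul_one]
      calc |max 0 (traj1 u v s)| * |(u s).2| ≤ |traj1 u v s| * 1 := by
            apply mul_le_mul _ (hu.2 s).2 (abs_nonneg _) (abs_nonneg _)
            rw [abs_of_nonneg (le_max_left _ _)]
            exact max_le (abs_nonneg _) (le_abs_self _)
        _ ≤ s := by rw [mul_one]; exact traj1_abs_le u v hu hv hs.1
    linarith [neg_abs_le (max 0 (traj1 u v s) * (u s).2 * (v s).2)]
  have hint := cost_integrand_ii u v hu hv 0 1
  have hmono := intervalIntegral.integral_mono_on (μ := volume) (a := (0:ℝ)) (b := 1)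
    (f := fun s => -s) (g := fun s => max 0 (traj1 u v s) * (u s).2 * (v s).2)
    (by norm_num) ((continuous_id.neg).intervalIntegrable 0 1) hint key
  have hid : (∫ s in (0:ℝ)..1, -s) = -1/2 := by
    rw [intervalIntegral.integral_neg]
    simp [integral_id]
    norm_num
  rw [cost]
  linarith [hmono, hid]

/-- The optimal strategy: `u₁ = v₁`, `u₂ = -v₂`. -/
def myStrat : (ℝ → ℝ × ℝ) → (ℝ → ℝ × ℝ) := fun v s => ((v s).1, -(v s).2)

lemma traj1_myStrat (v : ℝ → ℝ × ℝ) (hv : IsDisturbance v) (τ : ℝ) :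
    traj1 (myStrat v) v τ = τ := by
  have h : (fun r => ((myStrat v) r).1 * (v r).1) = fun _ => (1:ℝ) := by
    funext r
    rcases (hv.2 r).1 with h | h <;> simp [myStrat, h]
  rw [traj1, h]
  simp

lemma cost_myStrat (v : ℝ → ℝ × ℝ) (hv : IsDisturbance v) :
    cost (myStrat v) v = -1/2 := by
  have h : EqOn (fun s => max 0 (traj1 (myStrat v) v s) * ((myStrat v) s).2 * (v s).2)
      (fun s => -s) (uIcc (0:ℝ) 1) := by
    intro s hs
    rw [uIcc_of_le (by norm_num)] at hs
    have h2 : ((myStrat v) s).2 * (v s).2 = -1 := by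
      rcases (hv.2 s).2 with h | h <;> simp [myStrat, h]
    simp only [traj1_myStrat v hv, max_eq_right hs.1]
    calc s * ((myStrat v) s).2 * (v s).2 = s * (((myStrat v) s).2 * (v s).2) := by ring
      _ = -s := by rw [h2]; ring
  rw [cost, intervalIntegral.integral_congr h, intervalIntegral.integral_neg]
  simp [integral_id]
  norm_num

lemma myStrat_control (v : ℝ → ℝ × ℝ) (hv : IsDisturbance v) : IsControl (myStrat v) := by
  unfold myStrat
  refine ⟨hv.1.fst.prodMk hv.1.snd.neg, ?_⟩
  intro s
  refine ⟨(disturbance_abs v hv s).1.le, ?_⟩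
  simpa [myStrat] using (disturbance_abs v hv s).2.le

/-- In the example `ẋ₁ = u₁ v₁`, `ẋ₂ = max{0,x₁} u₂ v₂` on `[0,1]` with cost `x₂(1)`,
for every `ε > 0` some quasi-strategy guarantees `x₂(1) ≤ -1/2 + ε`, and no
quasi-strategy guarantees a value below `-1/2`: the optimal guaranteed result in the
class of quasi-strategies equals `-1/2`. -/
theorem quasi_strategy_value_example :
    (∀ ε > (0:ℝ), ∃ α : (ℝ → ℝ × ℝ) → (ℝ → ℝ × ℝ), NonAnticipatory α ∧
      (∀ v, IsDisturbance v → IsControl (α v)) ∧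
      (∀ v, IsDisturbance v → cost (α v) v ≤ -1/2 + ε)) ∧
    (∀ α : (ℝ → ℝ × ℝ) → (ℝ → ℝ × ℝ), NonAnticipatory α →
      (∀ v, IsDisturbance v → IsControl (α v)) →
      ∀ ε > (0:ℝ), ∃ v, IsDisturbance v ∧ cost (α v) v > -1/2 - ε) := by
  constructor
  · intro ε hε
    refine ⟨myStrat, ?_, fun v hv => myStrat_control v hv, fun v hv => ?_⟩
    · intro τ _ v v' _ _ heq s hs
      simp [myStrat, heq s hs]
    · rw [cost_myStrat v hv]; linarith
  · intro α _ hctrl ε hε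
    have hv : IsDisturbance (fun _ => ((1:ℝ), (1:ℝ))) :=
      ⟨measurable_const, fun _ => ⟨Or.inr rfl, Or.inr rfl⟩⟩
    refine ⟨_, hv, ?_⟩
    have := cost_ge (α (fun _ => ((1:ℝ), (1:ℝ)))) _ (hctrl _ hv) hv
    linarith
end
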